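/- Let a > 0 and τ > 0, and suppose the augmented dual objective D^a satisfies the error bound: for every λ ∈ ℝʳ and every minimizer (x̄, z̄) of (x,z) ↦ f(x) + g(z) + ⟨λ, Ax + Bz − b⟩ + (a/2)‖Ax + Bz − b‖², one has d_{Λ*}(λ) ≤ τ‖Ax̄ + Bz̄ − b‖. Then D satisfies the Polyak–Łojasiewicz inequality with constant L_p = a/τ²; that is, for every λ ∈ ℝʳ and every minimizer (x, z) of (x,z) ↦ f(x) + g(z) + ⟨λ, Ax + Bz − b⟩, one has D(λ*) − D(λ) ≤ (τ²/(2a))‖Ax + Bz − b‖². -/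

import Mathlib

open Matrix

lemma dotSelfNonneg {k : ℕ} (v : Fin k → ℝ) : 0 ≤ v ⬝ᵥ v :=
  Finset.sum_nonneg fun _ _ => mul_self_nonneg _

lemma csDot {k : ℕ} (u v : Fin k → ℝ) :
    u ⬝ᵥ v ≤ Real.sqrt (u ⬝ᵥ u) * Real.sqrt (v ⬝ᵥ v) := by
  have h := real_inner_mul_inner_self_le (F := EuclideanSpace ℝ (Fin k)) (WithLp.toLp 2 u) (WithLp.toLp 2 v)
  simp only [PiLp.inner_apply, PiLp.toLp_apply, RCLike.inner_apply, starRingEnd_apply, star_trivial] at h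
  have h2 : (u ⬝ᵥ v) * (u ⬝ᵥ v) ≤ (u ⬝ᵥ u) * (v ⬝ᵥ v) := by
    simpa [dotProduct, mul_comm] using h
  calc u ⬝ᵥ v ≤ |u ⬝ᵥ v| := le_abs_self _
    _ = Real.sqrt ((u ⬝ᵥ v) * (u ⬝ᵥ v)) := (Real.sqrt_mul_self_eq_abs _).symm
    _ ≤ Real.sqrt ((u ⬝ᵥ u) * (v ⬝ᵥ v)) := Real.sqrt_le_sqrt h2
    _ = _ := Real.sqrt_mul (dotSelfNonneg u) _

theorem stmt9 {n m r : ℕ}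
    (A : Matrix (Fin r) (Fin n) ℝ) (B : Matrix (Fin r) (Fin m) ℝ) (b : Fin r → ℝ)
    (f : (Fin n → ℝ) → ℝ) (g : (Fin m → ℝ) → ℝ)
    (hf : ConvexOn ℝ Set.univ f) (hg : ConvexOn ℝ Set.univ g)
    (a τ : ℝ) (ha : 0 < a) (hτ : 0 < τ)
    -- the dual objective D: lower bound property, and equality at attained minimizers
    (D : (Fin r → ℝ) → ℝ)
    (hD_lb : ∀ (lam : Fin r → ℝ) (x : Fin n → ℝ) (z : Fin m → ℝ),
      D lam ≤ f x + g z + lam ⬝ᵥ (A *ᵥ x + B *ᵥ z - b))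
    (hD_eq : ∀ (lam : Fin r → ℝ) (x : Fin n → ℝ) (z : Fin m → ℝ),
      (∀ x' z', f x + g z + lam ⬝ᵥ (A *ᵥ x + B *ᵥ z - b)
          ≤ f x' + g z' + lam ⬝ᵥ (A *ᵥ x' + B *ᵥ z' - b)) →
      D lam = f x + g z + lam ⬝ᵥ (A *ᵥ x + B *ᵥ z - b))
    -- λ* is a dual optimal point
    (lamstar : Fin r → ℝ) (hstar : ∀ lam, D lam ≤ D lamstar)
    -- error bound for the augmented dual objective:
    (hEB : ∀ (lam : Fin r → ℝ) (xb : Fin n → ℝ) (zb : Fin m → ℝ),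
      (∀ x' z',
        f xb + g zb + lam ⬝ᵥ (A *ᵥ xb + B *ᵥ zb - b)
            + a / 2 * ((A *ᵥ xb + B *ᵥ zb - b) ⬝ᵥ (A *ᵥ xb + B *ᵥ zb - b))
          ≤ f x' + g z' + lam ⬝ᵥ (A *ᵥ x' + B *ᵥ z' - b)
            + a / 2 * ((A *ᵥ x' + B *ᵥ z' - b) ⬝ᵥ (A *ᵥ x' + B *ᵥ z' - b))) →
      sInf {dd : ℝ | ∃ ν : Fin r → ℝ, (∀ μ, D μ ≤ D ν) ∧
          dd = Real.sqrt ((ν - lam) ⬝ᵥ (ν - lam))}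
        ≤ τ * Real.sqrt ((A *ᵥ xb + B *ᵥ zb - b) ⬝ᵥ (A *ᵥ xb + B *ᵥ zb - b))) :
    -- conclusion: D satisfies the PŁ inequality with constant L_p = a/τ²
    ∀ (lam : Fin r → ℝ) (x : Fin n → ℝ) (z : Fin m → ℝ),
      (∀ x' z', f x + g z + lam ⬝ᵥ (A *ᵥ x + B *ᵥ z - b)
          ≤ f x' + g z' + lam ⬝ᵥ (A *ᵥ x' + B *ᵥ z' - b)) →
      D lamstar - D lam
        ≤ τ ^ 2 / (2 * a) * ((A *ᵥ x + B *ᵥ z - b) ⬝ᵥ (A *ᵥ x + B *ᵥ z - b)) := by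
  intro lam x z h
  set ρ : Fin r → ℝ := A *ᵥ x + B *ᵥ z - b with hρ
  set R : ℝ := ρ ⬝ᵥ ρ with hR
  have hR0 : 0 ≤ R := dotSelfNonneg ρ
  have hsqR : Real.sqrt R * Real.sqrt R = R := Real.mul_self_sqrt hR0
  set lamh : Fin r → ℝ := lam - a • ρ with hlamh
  -- expansion of hat dot products
  have hdot : ∀ w : Fin r → ℝ, lamh ⬝ᵥ w = lam ⬝ᵥ w - a * (ρ ⬝ᵥ w) := by
    intro w; simp [hlamh, sub_dotProduct, smul_dotProduct, smul_eq_mul]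
  -- (x, z) minimizes the augmented Lagrangian at lamh
  have haug : ∀ x' z',
      f x + g z + lamh ⬝ᵥ (A *ᵥ x + B *ᵥ z - b)
          + a / 2 * ((A *ᵥ x + B *ᵥ z - b) ⬝ᵥ (A *ᵥ x + B *ᵥ z - b))
        ≤ f x' + g z' + lamh ⬝ᵥ (A *ᵥ x' + B *ᵥ z' - b)
          + a / 2 * ((A *ᵥ x' + B *ᵥ z' - b) ⬝ᵥ (A *ᵥ x' + B *ᵥ z' - b)) := by
    intro x' z'
    set ρ' : Fin r → ℝ := A *ᵥ x' + B *ᵥ z' - b with hρ'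
    have hplain := h x' z'
    simp only [← hρ, ← hρ', ← hR]
    rw [hdot ρ, hdot ρ']
    have hexp : (ρ' - ρ) ⬝ᵥ (ρ' - ρ) = ρ' ⬝ᵥ ρ' - 2 * (ρ ⬝ᵥ ρ') + R := by
      simp [sub_dotProduct, dotProduct_sub, hR]
      rw [dotProduct_comm ρ' ρ]; ring
    have hsq : 0 ≤ (ρ' - ρ) ⬝ᵥ (ρ' - ρ) := dotSelfNonneg _
    nlinarith [hsq, hplain, ha.le]
  have hEB' := hEB lamh x z haug
  rw [← hρ, ← hR] at hEB'
  -- it suffices to bound by (τ - a) * R plus arbitrary ε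
  have key : D lamstar - D lam ≤ (τ - a) * R := by
    refine le_of_forall_pos_le_add fun ε hε => ?_
    have hε' : 0 < ε / (Real.sqrt R + 1) := by positivity
    have hne : {dd : ℝ | ∃ ν : Fin r → ℝ, (∀ μ, D μ ≤ D ν) ∧
        dd = Real.sqrt ((ν - lamh) ⬝ᵥ (ν - lamh))}.Nonempty :=
      ⟨_, lamstar, hstar, rfl⟩
    obtain ⟨s, hs, hslt⟩ := Real.lt_sInf_add_pos hne hε'
    obtain ⟨ν, hνopt, rfl⟩ := hs
    have hdist : Real.sqrt ((ν - lamh) ⬝ᵥ (ν - lamh))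
        < τ * Real.sqrt R + ε / (Real.sqrt R + 1) :=
      lt_of_lt_of_le hslt (by linarith [hEB'])
    -- weak duality chain
    have h1 : D lamstar ≤ D ν := hνopt lamstar
    have h2 : D ν ≤ f x + g z + ν ⬝ᵥ ρ := hD_lb ν x z
    have h3 : D lam = f x + g z + lam ⬝ᵥ ρ := hD_eq lam x z h
    have h4 : D lamstar - D lam ≤ (ν - lam) ⬝ᵥ ρ := by
      have : (ν - lam) ⬝ᵥ ρ = ν ⬝ᵥ ρ - lam ⬝ᵥ ρ := by simp [sub_dotProduct]
      rw [this]; linarith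
    have h5 : (ν - lam) ⬝ᵥ ρ = (ν - lamh) ⬝ᵥ ρ - a * R := by
      simp [hlamh, sub_dotProduct, smul_dotProduct, smul_eq_mul, hR]; ring
    have h6 : (ν - lamh) ⬝ᵥ ρ ≤ Real.sqrt ((ν - lamh) ⬝ᵥ (ν - lamh)) * Real.sqrt R :=
      csDot _ _
    have h7 : Real.sqrt ((ν - lamh) ⬝ᵥ (ν - lamh)) * Real.sqrt R
        ≤ (τ * Real.sqrt R + ε / (Real.sqrt R + 1)) * Real.sqrt R := by
      apply mul_le_mul_of_nonneg_right hdist.le (Real.sqrt_nonneg _)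
    have h8 : (τ * Real.sqrt R + ε / (Real.sqrt R + 1)) * Real.sqrt R
        ≤ τ * R + ε := by
      have hs1 : ε / (Real.sqrt R + 1) * Real.sqrt R ≤ ε := by
        rw [div_mul_eq_mul_div, div_le_iff₀ (by positivity)]
        nlinarith [Real.sqrt_nonneg R, hε.le]
      nlinarith [hsqR]
    linarith
  have : (τ - a) * R ≤ τ ^ 2 / (2 * a) * R := by
    apply mul_le_mul_of_nonneg_right _ hR0
    rw [le_div_iff₀ (by linarith)]
    nlinarith [sq_nonneg (τ - a)]
  linarith
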